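/- arXiv:1310.2742 — 2 statements merged into one kernel-verified Lean document; each statement's English description precedes it below -/
import Mathlib

section
/- Let V_F, V_E, g_L with 0 < V_F < V_E and g_L > 0, and set J_v(v,g) := −g_L v + g(V_E − v). Let p : (0,V_F)×(0,∞) → [0,∞) be measurable with √p weakly differentiable in g, p(v,g) → 0 as g → ∞ for a.e. v, ∫₀^{V_F}∫₀^∞ |∂_g √p|² dg dv ≤ K < ∞ and ∫₀^{V_F}∫₀^∞ p dg dv ≤ 1. Then for every 0 ≤ α < 1 and every G > 0 there is a finite constant C(α, G, K) (depending also on V_F, V_E, g_L) such that ∫₀^{V_F}∫₀^G p(v,g)/|J_v(v,g)|^α dg dv ≤ C(α, G, K). -/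
open MeasureTheory Filter Set
open scoped ENNReal NNReal

noncomputable section

/-- Helper: a.e.-measurability of the partial lintegral. -/
lemma aemeas_lintegral_prod_right {α β : Type*} [MeasurableSpace α] [MeasurableSpace β]
    {μ : Measure α} {ν : Measure β} [SFinite ν] {f : α × β → ℝ≥0∞}
    (hf : AEMeasurable f (μ.prod ν)) :
    AEMeasurable (fun x => ∫⁻ y, f (x, y) ∂ν) μ := by
  refine ⟨fun x => ∫⁻ y, hf.mk f (x, y) ∂ν, hf.measurable_mk.lintegral_prod_right', ?_⟩
  filter_upwards [Measure.ae_ae_of_ae_prod hf.ae_eq_mk] with x hx using lintegral_congr_ae hx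

/-- Key pointwise bound: `p(g₀) ≤ ∫ (∂√p)² + ∫ p` on `(0,∞)`. -/
lemma pointwise_bound (pv : ℝ → ℝ) (hm : Measurable pv) (hp : ∀ g, 0 ≤ pv g)
    (hdiff : DifferentiableOn ℝ (fun g => Real.sqrt (pv g)) (Set.Ioi 0))
    (hlim : Filter.Tendsto pv Filter.atTop (nhds 0))
    (hA : (∫⁻ g in Set.Ioi (0:ℝ),
        ENNReal.ofReal ((deriv (fun g' => Real.sqrt (pv g')) g) ^ 2)) ≠ ⊤)
    (hB : (∫⁻ g in Set.Ioi (0:ℝ), ENNReal.ofReal (pv g)) ≠ ⊤)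
    {g₀ : ℝ} (hg₀ : 0 < g₀) :
    ENNReal.ofReal (pv g₀) ≤
      (∫⁻ g in Set.Ioi (0:ℝ),
        ENNReal.ofReal ((deriv (fun g' => Real.sqrt (pv g')) g) ^ 2)) +
      (∫⁻ g in Set.Ioi (0:ℝ), ENNReal.ofReal (pv g)) := by
  set q : ℝ → ℝ := fun g => Real.sqrt (pv g) with hqdef
  set q' : ℝ → ℝ := deriv q with hq'def
  have hqm : Measurable q := Real.continuous_sqrt.measurable.comp hm
  have hq'm : Measurable q' := measurable_deriv q
  have hsubset : Set.Ioi g₀ ⊆ Set.Ioi (0:ℝ) := Set.Ioi_subset_Ioi hg₀.le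
  have hBfin : (∫⁻ g in Set.Ioi g₀, ENNReal.ofReal (pv g)) < ⊤ :=
    lt_of_le_of_lt (lintegral_mono_set hsubset) hB.lt_top
  have hAfin : (∫⁻ g in Set.Ioi g₀, ENNReal.ofReal (q' g ^ 2)) < ⊤ :=
    lt_of_le_of_lt (lintegral_mono_set hsubset) hA.lt_top
  have hIB : IntegrableOn pv (Set.Ioi g₀) :=
    ⟨hm.aestronglyMeasurable, (hasFiniteIntegral_iff_ofReal (ae_of_all _ hp)).2 hBfin⟩
  have hIA : IntegrableOn (fun g => q' g ^ 2) (Set.Ioi g₀) :=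
    ⟨(hq'm.pow_const 2).aestronglyMeasurable,
      (hasFiniteIntegral_iff_ofReal (ae_of_all _ fun g => sq_nonneg _)).2 hAfin⟩
  have hder : ∀ g ∈ Set.Ioi (0:ℝ), HasDerivAt pv (2 * q g * q' g) g := by
    intro g hg
    have hd : DifferentiableAt ℝ q g := hdiff.differentiableAt (Ioi_mem_nhds hg)
    have h1 : HasDerivAt q (q' g) g := hd.hasDerivAt
    have h2 := h1.mul h1
    have hfe : pv = fun g => q g * q g := funext fun g => (Real.mul_self_sqrt (hp g)).symm
    rw [hfe]
    exact h2.congr_deriv (by ring)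
  have hcont : ContinuousWithinAt pv (Set.Ici g₀) g₀ :=
    (hder g₀ hg₀).continuousAt.continuousWithinAt
  set d : ℝ → ℝ := fun g => 2 * q g * q' g with hddef
  have hbound : ∀ g, |d g| ≤ pv g + q' g ^ 2 := by
    intro g
    have h1 : |d g| = 2 * |q g| * |q' g| := by
      show |2 * q g * q' g| = _
      rw [abs_mul, abs_mul, abs_two]
    have h2 : 2 * |q g| * |q' g| ≤ |q g| ^ 2 + |q' g| ^ 2 := two_mul_le_add_sq _ _
    have h3 : |q g| ^ 2 = pv g := by rw [sq_abs]; exact Real.sq_sqrt (hp g)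
    rw [h1]
    calc 2 * |q g| * |q' g| ≤ |q g| ^ 2 + |q' g| ^ 2 := h2
      _ = pv g + q' g ^ 2 := by rw [h3, sq_abs]
  have hId : IntegrableOn d (Set.Ioi g₀) := by
    refine (hIB.add hIA).mono' ?_ (ae_of_all _ fun g => ?_)
    · exact ((hqm.const_mul 2).mul hq'm).aestronglyMeasurable
    · simpa [Real.norm_eq_abs] using hbound g
  have hFTC : ∫ g in Set.Ioi g₀, d g = 0 - pv g₀ :=
    integral_Ioi_of_hasDerivAt_of_tendsto hcont (fun x hx => hder x (hsubset hx)) hId hlim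
  have h1 : pv g₀ ≤ ∫ g in Set.Ioi g₀, |d g| := by
    have he : pv g₀ = -(∫ g in Set.Ioi g₀, d g) := by rw [hFTC]; ring
    rw [he]
    have hni := norm_integral_le_integral_norm (μ := volume.restrict (Set.Ioi g₀)) d
    simp only [Real.norm_eq_abs] at hni
    exact (neg_le_abs _).trans hni
  have h2 : (∫ g in Set.Ioi g₀, |d g|) ≤ ∫ g in Set.Ioi g₀, (pv g + q' g ^ 2) :=
    integral_mono hId.abs (hIB.add hIA) hbound
  have h3 : (∫ g in Set.Ioi g₀, (pv g + q' g ^ 2))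
      = (∫ g in Set.Ioi g₀, pv g) + ∫ g in Set.Ioi g₀, q' g ^ 2 := integral_add hIB hIA
  have h4 : (∫ g in Set.Ioi g₀, pv g)
      ≤ (∫⁻ g in Set.Ioi (0:ℝ), ENNReal.ofReal (pv g)).toReal := by
    rw [integral_eq_lintegral_of_nonneg_ae (ae_of_all _ hp) hm.aestronglyMeasurable]
    exact ENNReal.toReal_mono hB (lintegral_mono_set hsubset)
  have h5 : (∫ g in Set.Ioi g₀, q' g ^ 2)
      ≤ (∫⁻ g in Set.Ioi (0:ℝ), ENNReal.ofReal (q' g ^ 2)).toReal := by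
    rw [integral_eq_lintegral_of_nonneg_ae (ae_of_all _ fun g => sq_nonneg _)
      (hq'm.pow_const 2).aestronglyMeasurable]
    exact ENNReal.toReal_mono hA (lintegral_mono_set hsubset)
  have h6 : pv g₀ ≤ (∫⁻ g in Set.Ioi (0:ℝ), ENNReal.ofReal (q' g ^ 2)).toReal +
      (∫⁻ g in Set.Ioi (0:ℝ), ENNReal.ofReal (pv g)).toReal := by
    have := h1.trans (h2.trans_eq h3)
    linarith
  calc ENNReal.ofReal (pv g₀)
      ≤ ENNReal.ofReal ((∫⁻ g in Set.Ioi (0:ℝ), ENNReal.ofReal (q' g ^ 2)).toReal +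
        (∫⁻ g in Set.Ioi (0:ℝ), ENNReal.ofReal (pv g)).toReal) := ENNReal.ofReal_le_ofReal h6
    _ = (∫⁻ g in Set.Ioi (0:ℝ), ENNReal.ofReal (q' g ^ 2)) +
        (∫⁻ g in Set.Ioi (0:ℝ), ENNReal.ofReal (pv g)) := by
        rw [ENNReal.ofReal_add ENNReal.toReal_nonneg ENNReal.toReal_nonneg,
          ENNReal.ofReal_toReal hA, ENNReal.ofReal_toReal hB]

/-- Uniform bound on the integral of the singular weight. -/
lemma weight_bound (VF VE gL : ℝ) (hVF : 0 < VF) (hVFE : VF < VE) (hgL : 0 < gL)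
    (α G : ℝ) (hα0 : 0 ≤ α) (hα1 : α < 1) (hG : 0 < G) {v : ℝ} (hv : v ∈ Set.Ioo (0:ℝ) VF) :
    (∫⁻ g in Set.Ioo (0:ℝ) G, ENNReal.ofReal ((|(-gL * v + g * (VE - v))| ^ α)⁻¹))
      ≤ ENNReal.ofReal (((VE - VF) ^ α)⁻¹ *
          (2 * ((G + gL * VF / (VE - VF)) ^ (1 - α) / (1 - α)))) := by
  set s₀ : ℝ := VE - VF with hs₀def
  have hs₀ : 0 < s₀ := by rw [hs₀def]; linarith
  set s : ℝ := VE - v with hsdef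
  have hss₀ : s₀ ≤ s := by rw [hsdef, hs₀def]; linarith [hv.2]
  have hs : 0 < s := lt_of_lt_of_le hs₀ hss₀
  set gs : ℝ := gL * v / s with hgsdef
  have hgs0 : 0 ≤ gs := div_nonneg (mul_nonneg hgL.le hv.1.le) hs.le
  set Gm : ℝ := G + gL * VF / s₀ with hGmdef
  have hgsle : gs ≤ gL * VF / s₀ :=
    div_le_div₀ (mul_nonneg hgL.le hVF.le)
      (mul_le_mul_of_nonneg_left hv.2.le hgL.le) hs₀ hss₀
  have hGm : 0 < Gm := by
    have : 0 ≤ gL * VF / s₀ := div_nonneg (mul_nonneg hgL.le hVF.le) hs₀.le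
    rw [hGmdef]; linarith
  set φ : ℝ → ℝ≥0∞ := fun u => ENNReal.ofReal ((|u| ^ α)⁻¹) with hφdef
  -- pointwise bound of the weight
  have hpt : ∀ g : ℝ, ENNReal.ofReal ((|(-gL * v + g * (VE - v))| ^ α)⁻¹)
      ≤ ENNReal.ofReal ((s₀ ^ α)⁻¹) * φ (g - gs) := by
    intro g
    have hJ : -gL * v + g * (VE - v) = s * (g - gs) := by
      rw [hsdef, hgsdef]
      field_simp
      ring
    have habs : |(-gL * v + g * (VE - v))| = s * |g - gs| := by
      rw [hJ, abs_mul, abs_of_pos hs]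
    have hpow : |(-gL * v + g * (VE - v))| ^ α = s ^ α * |g - gs| ^ α := by
      rw [habs, Real.mul_rpow hs.le (abs_nonneg _)]
    have hle : ((s ^ α) * |g - gs| ^ α)⁻¹ ≤ (s₀ ^ α)⁻¹ * (|g - gs| ^ α)⁻¹ := by
      rw [mul_inv]
      refine mul_le_mul_of_nonneg_right ?_ (inv_nonneg.2 (Real.rpow_nonneg (abs_nonneg _) _))
      exact inv_anti₀ (Real.rpow_pos_of_pos hs₀ α)
        (Real.rpow_le_rpow hs₀.le hss₀ hα0)
    calc ENNReal.ofReal ((|(-gL * v + g * (VE - v))| ^ α)⁻¹)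
        ≤ ENNReal.ofReal ((s₀ ^ α)⁻¹ * (|g - gs| ^ α)⁻¹) := by
          rw [hpow]; exact ENNReal.ofReal_le_ofReal hle
      _ = ENNReal.ofReal ((s₀ ^ α)⁻¹) * φ (g - gs) := by
          rw [ENNReal.ofReal_mul (inv_nonneg.2 (Real.rpow_nonneg hs₀.le _))]
  -- translation
  have htrans : (∫⁻ g in Set.Ioo (0:ℝ) G, φ (g - gs))
      = ∫⁻ u in Set.Ioo (-gs) (G - gs), φ u := by
    have h1 : (∫⁻ g in Set.Ioo (0:ℝ) G, φ (g - gs))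
        = ∫⁻ x, (Set.Ioo (0:ℝ) G).indicator (fun g => φ (g - gs)) x :=
      (lintegral_indicator measurableSet_Ioo _).symm
    have h2 : ∀ u : ℝ, (Set.Ioo (0:ℝ) G).indicator (fun g => φ (g - gs)) (u + gs)
        = (Set.Ioo (-gs) (G - gs)).indicator φ u := by
      intro u
      simp only [Set.indicator_apply, Set.mem_Ioo, add_sub_cancel_right]
      refine if_congr ?_ rfl rfl
      constructor <;> rintro ⟨ha, hb⟩ <;> constructor <;> linarith
    rw [h1, ← lintegral_add_right_eq_self
      ((Set.Ioo (0:ℝ) G).indicator (fun g => φ (g - gs))) gs]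
    simp_rw [h2]
    exact lintegral_indicator measurableSet_Ioo _
  have hsub : Set.Ioo (-gs) (G - gs) ⊆ Set.Ioo (-Gm) Gm := by
    have hnn : 0 ≤ gL * VF / s₀ := div_nonneg (mul_nonneg hgL.le hVF.le) hs₀.le
    have h3 : gs ≤ Gm := by
      rw [hGmdef]
      calc gs ≤ gL * VF / s₀ := hgsle
        _ ≤ G + gL * VF / s₀ := by linarith
    have h4 : G ≤ Gm := by rw [hGmdef]; linarith
    intro u hu
    obtain ⟨h1, h2⟩ := hu
    constructor
    · linarith
    · linarith
  -- split symmetric interval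
  have hsplit : (∫⁻ u in Set.Ioo (-Gm) Gm, φ u)
      ≤ (∫⁻ u in Set.Ioc (-Gm) 0, φ u) + ∫⁻ u in Set.Ioc 0 Gm, φ u := by
    refine le_trans (lintegral_mono_set ?_) (lintegral_union_le _ _ _)
    intro u hu
    rcases le_or_gt u 0 with h | h
    · exact Or.inl ⟨hu.1, h⟩
    · exact Or.inr ⟨h, hu.2.le⟩
  -- reflect negative part
  have hneg : (∫⁻ u in Set.Ioc (-Gm) 0, φ u) = ∫⁻ u in Set.Ico 0 Gm, φ u := by
    have h1 : (∫⁻ u in Set.Ioc (-Gm) 0, φ u)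
        = ∫⁻ x, (Set.Ioc (-Gm) 0).indicator φ x := (lintegral_indicator measurableSet_Ioc _).symm
    have h2 : (∫⁻ x, (Set.Ioc (-Gm) 0).indicator φ x)
        = ∫⁻ x, (Set.Ioc (-Gm) 0).indicator φ (-x) := by
      have h := lintegral_map_equiv (μ := (volume : Measure ℝ))
        ((Set.Ioc (-Gm) 0).indicator φ) (MeasurableEquiv.neg ℝ)
      have hmap : Measure.map (⇑(MeasurableEquiv.neg ℝ)) (volume : Measure ℝ) = volume :=
        Measure.map_neg_eq_self volume
      rw [hmap] at h
      exact h.trans (lintegral_congr fun a => rfl)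
    have h3 : ∀ x : ℝ, (Set.Ioc (-Gm) 0).indicator φ (-x)
        = (Set.Ico (0:ℝ) Gm).indicator φ x := by
      intro x
      simp only [Set.indicator_apply, Set.mem_Ioc, Set.mem_Ico, hφdef, abs_neg]
      refine if_congr ?_ rfl rfl
      constructor <;> rintro ⟨ha, hb⟩ <;> constructor <;> linarith
    rw [h1, h2]
    simp_rw [h3]
    exact lintegral_indicator measurableSet_Ico _
  have hIcoIoc : (∫⁻ u in Set.Ico (0:ℝ) Gm, φ u) = ∫⁻ u in Set.Ioc (0:ℝ) Gm, φ u :=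
    setLIntegral_congr Ico_ae_eq_Ioc
  -- compute the model integral
  have hE : (∫⁻ u in Set.Ioc (0:ℝ) Gm, φ u) = ENNReal.ofReal (Gm ^ (1 - α) / (1 - α)) := by
    have hcongr : (∫⁻ u in Set.Ioc (0:ℝ) Gm, φ u)
        = ∫⁻ u in Set.Ioc (0:ℝ) Gm, ENNReal.ofReal (u ^ (-α)) := by
      refine setLIntegral_congr_fun measurableSet_Ioc (fun u hu => ?_)
      show ENNReal.ofReal ((|u| ^ α)⁻¹) = ENNReal.ofReal (u ^ (-α))
      rw [abs_of_pos hu.1, ← Real.rpow_neg hu.1.le]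
    have hInt : IntegrableOn (fun u : ℝ => u ^ (-α)) (Set.Ioc 0 Gm) := by
      have h := intervalIntegral.intervalIntegrable_rpow' (a := 0) (b := Gm)
        (r := -α) (by linarith)
      rwa [intervalIntegrable_iff, Set.uIoc_of_le hGm.le] at h
    have hnn : 0 ≤ᵐ[volume.restrict (Set.Ioc (0:ℝ) Gm)] fun u : ℝ => u ^ (-α) :=
      ae_restrict_of_forall_mem measurableSet_Ioc fun u hu => Real.rpow_nonneg hu.1.le _
    have hval : (∫ u in Set.Ioc (0:ℝ) Gm, u ^ (-α)) = Gm ^ (1 - α) / (1 - α) := by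
      rw [← intervalIntegral.integral_of_le hGm.le]
      rw [integral_rpow (Or.inl (by linarith))]
      rw [Real.zero_rpow (by linarith : -α + 1 ≠ 0)]
      norm_num
      ring_nf
    rw [hcongr, ← ofReal_integral_eq_lintegral_ofReal hInt hnn, hval]
  -- put everything together
  calc (∫⁻ g in Set.Ioo (0:ℝ) G, ENNReal.ofReal ((|(-gL * v + g * (VE - v))| ^ α)⁻¹))
      ≤ ∫⁻ g in Set.Ioo (0:ℝ) G, ENNReal.ofReal ((s₀ ^ α)⁻¹) * φ (g - gs) :=
        lintegral_mono fun g => hpt g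
    _ = ENNReal.ofReal ((s₀ ^ α)⁻¹) * ∫⁻ g in Set.Ioo (0:ℝ) G, φ (g - gs) :=
        lintegral_const_mul' _ _ ENNReal.ofReal_ne_top
    _ ≤ ENNReal.ofReal ((s₀ ^ α)⁻¹) * ∫⁻ u in Set.Ioo (-Gm) Gm, φ u := by
        rw [htrans]; exact mul_le_mul_right (lintegral_mono_set hsub) _
    _ ≤ ENNReal.ofReal ((s₀ ^ α)⁻¹) *
        (ENNReal.ofReal (Gm ^ (1 - α) / (1 - α)) + ENNReal.ofReal (Gm ^ (1 - α) / (1 - α))) := by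
        refine mul_le_mul_right (hsplit.trans ?_) _
        rw [hneg, hIcoIoc, hE]
    _ = ENNReal.ofReal ((s₀ ^ α)⁻¹ * (2 * (Gm ^ (1 - α) / (1 - α)))) := by
        have hnum : 0 ≤ Gm ^ (1 - α) / (1 - α) :=
          div_nonneg (Real.rpow_nonneg hGm.le _) (by linarith)
        rw [← ENNReal.ofReal_add hnum hnum,
          ← ENNReal.ofReal_mul (inv_nonneg.2 (Real.rpow_nonneg hs₀.le _))]
        ring_nf
    _ = ENNReal.ofReal (((VE - VF) ^ α)⁻¹ *
          (2 * ((G + gL * VF / (VE - VF)) ^ (1 - α) / (1 - α)))) := rfl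

/-- Lemma 3.3. Integrability of the density against the singular
weight `|J_v|^{-α}`, `0 ≤ α < 1`, with a constant depending only on `α`, `G`, `K`
and the parameters. -/
theorem singular_weight_integrability
    (VF VE gL : ℝ) (hVF : 0 < VF) (hVFE : VF < VE) (hgL : 0 < gL)
    (α G K : ℝ) (hα0 : 0 ≤ α) (hα1 : α < 1) (hG : 0 < G) (hK : 0 ≤ K) :
    ∃ C : ℝ, ∀ p : ℝ → ℝ → ℝ,
      Measurable (fun x : ℝ × ℝ => p x.1 x.2) →
      (∀ v g, 0 ≤ p v g) →
      (∀ v ∈ Set.Ioo (0:ℝ) VF,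
          DifferentiableOn ℝ (fun g => Real.sqrt (p v g)) (Set.Ioi 0)) →
      (∀ v ∈ Set.Ioo (0:ℝ) VF, Filter.Tendsto (fun g => p v g) Filter.atTop (nhds 0)) →
      (∫⁻ x in ((Set.Ioo (0:ℝ) VF) ×ˢ (Set.Ioi (0:ℝ))),
          ENNReal.ofReal ((deriv (fun g' => Real.sqrt (p x.1 g')) x.2) ^ 2))
        ≤ ENNReal.ofReal K →
      (∫⁻ x in ((Set.Ioo (0:ℝ) VF) ×ˢ (Set.Ioi (0:ℝ))), ENNReal.ofReal (p x.1 x.2)) ≤ 1 →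
      (∫⁻ x in ((Set.Ioo (0:ℝ) VF) ×ˢ (Set.Ioo (0:ℝ) G)),
          ENNReal.ofReal (p x.1 x.2 / |(-gL * x.1 + x.2 * (VE - x.1))| ^ α))
        ≤ ENNReal.ofReal C := by
  set M : ℝ := ((VE - VF) ^ α)⁻¹ *
      (2 * ((G + gL * VF / (VE - VF)) ^ (1 - α) / (1 - α))) with hMdef
  have hM : 0 ≤ M := by
    have h1 : 0 < VE - VF := by linarith
    have h2 : 0 ≤ G + gL * VF / (VE - VF) := by positivity
    have h3 : 0 < 1 - α := by linarith
    positivity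
  refine ⟨M * (K + 1), ?_⟩
  intro p hpm hp hdiff hlim hKint hmass
  have hprod : ∀ (s t : Set ℝ) (f : ℝ × ℝ → ℝ≥0∞),
      (∫⁻ x in s ×ˢ t, f x) = ∫⁻ x, f x ∂((volume.restrict s).prod (volume.restrict t)) := by
    intro s t f
    rw [Measure.prod_restrict, ← Measure.volume_eq_prod]
  rw [hprod] at hKint hmass ⊢
  -- joint a.e.-measurability of the derivative
  set D : ℝ × ℝ → ℝ := fun x => deriv (fun g' => Real.sqrt (p x.1 g')) x.2 with hDdef
  have hq : Measurable (fun x : ℝ × ℝ => Real.sqrt (p x.1 x.2)) :=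
    Real.continuous_sqrt.measurable.comp hpm
  have hD : AEMeasurable D
      ((volume.restrict (Set.Ioo (0:ℝ) VF)).prod (volume.restrict (Set.Ioi (0:ℝ)))) := by
    set F : ℕ → ℝ × ℝ → ℝ := fun n x =>
      (Real.sqrt (p x.1 (x.2 + 1 / ((n : ℝ) + 1))) - Real.sqrt (p x.1 x.2)) / (1 / ((n : ℝ) + 1))
      with hFdef
    have hFm : ∀ n, Measurable (F n) := by
      intro n
      exact ((hq.comp (measurable_fst.prodMk (measurable_snd.add_const _))).sub hq).div_const _
    have htend : ∀ x ∈ (Set.Ioo (0:ℝ) VF) ×ˢ (Set.Ioi (0:ℝ)),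
        Filter.Tendsto (fun n => F n x) Filter.atTop (nhds (D x)) := by
      rintro ⟨v, g⟩ ⟨hv, hg⟩
      have hda : DifferentiableAt ℝ (fun g' => Real.sqrt (p v g')) g :=
        (hdiff v hv).differentiableAt (Ioi_mem_nhds hg)
      have hslope := hasDerivAt_iff_tendsto_slope.1 hda.hasDerivAt
      have hseq : Filter.Tendsto (fun n : ℕ => g + 1 / ((n : ℝ) + 1)) Filter.atTop
          (nhdsWithin g {g}ᶜ) := by
        refine tendsto_nhdsWithin_of_tendsto_nhds_of_eventually_within _ ?_ ?_
        · have : Filter.Tendsto (fun n : ℕ => 1 / ((n : ℝ) + 1)) Filter.atTop (nhds 0) :=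
            tendsto_one_div_add_atTop_nhds_zero_nat
          simpa using tendsto_const_nhds.add this
        · filter_upwards with n
          simp only [Set.mem_compl_iff, Set.mem_singleton_iff]
          have : (0:ℝ) < 1 / ((n : ℝ) + 1) := by positivity
          intro h
          nlinarith [this]
      have := hslope.comp hseq
      refine this.congr fun n => ?_
      simp only [Function.comp_apply, slope_def_field, hFdef, add_sub_cancel_left]
    refine aemeasurable_of_tendsto_metrizable_ae' (fun n => (hFm n).aemeasurable) ?_
    rw [Measure.prod_restrict]
    exact ae_restrict_of_forall_mem (measurableSet_Ioo.prod measurableSet_Ioi) htend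
  have hfK : AEMeasurable (fun x => ENNReal.ofReal (D x ^ 2))
      ((volume.restrict (Set.Ioo (0:ℝ) VF)).prod (volume.restrict (Set.Ioi (0:ℝ)))) :=
    (hD.pow_const 2).ennreal_ofReal
  have hfB : Measurable (fun x : ℝ × ℝ => ENNReal.ofReal (p x.1 x.2)) :=
    hpm.ennreal_ofReal
  -- the A and B functions
  set A : ℝ → ℝ≥0∞ := fun v => ∫⁻ g in Set.Ioi (0:ℝ),
      ENNReal.ofReal ((deriv (fun g' => Real.sqrt (p v g')) g) ^ 2) with hAdef
  set B : ℝ → ℝ≥0∞ := fun v => ∫⁻ g in Set.Ioi (0:ℝ), ENNReal.ofReal (p v g) with hBdef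
  have hAmeas : AEMeasurable A (volume.restrict (Set.Ioo (0:ℝ) VF)) :=
    aemeas_lintegral_prod_right hfK
  have hBmeas : AEMeasurable B (volume.restrict (Set.Ioo (0:ℝ) VF)) :=
    aemeas_lintegral_prod_right hfB.aemeasurable
  have hKv : (∫⁻ v in Set.Ioo (0:ℝ) VF, A v) ≤ ENNReal.ofReal K :=
    (lintegral_prod _ hfK).symm.trans_le hKint
  have hBv : (∫⁻ v in Set.Ioo (0:ℝ) VF, B v) ≤ 1 :=
    (lintegral_prod _ hfB.aemeasurable).symm.trans_le hmass
  have hAfin : ∀ᵐ v ∂(volume.restrict (Set.Ioo (0:ℝ) VF)), A v < ⊤ :=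
    ae_lt_top' hAmeas (lt_of_le_of_lt hKv ENNReal.ofReal_lt_top).ne
  have hBfin : ∀ᵐ v ∂(volume.restrict (Set.Ioo (0:ℝ) VF)), B v < ⊤ :=
    ae_lt_top' hBmeas (lt_of_le_of_lt hBv ENNReal.one_lt_top).ne
  -- main integrand measurability
  have hJm : Measurable (fun x : ℝ × ℝ => |(-gL * x.1 + x.2 * (VE - x.1))| ^ α) :=
    (((measurable_fst.const_mul (-gL)).add
      (measurable_snd.mul (measurable_const.sub measurable_fst))).abs).pow_const α
  have hfmain : Measurable (fun x : ℝ × ℝ =>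
      ENNReal.ofReal (p x.1 x.2 / |(-gL * x.1 + x.2 * (VE - x.1))| ^ α)) :=
    (hpm.div hJm).ennreal_ofReal
  -- the per-v bound
  have hae : ∀ᵐ v ∂(volume.restrict (Set.Ioo (0:ℝ) VF)),
      (∫⁻ g in Set.Ioo (0:ℝ) G,
        ENNReal.ofReal (p v g / |(-gL * v + g * (VE - v))| ^ α))
      ≤ (A v + B v) * ENNReal.ofReal M := by
    filter_upwards [hAfin, hBfin, ae_restrict_mem measurableSet_Ioo] with v hAv hBv hv
    have hpvm : Measurable (p v) := hpm.comp (measurable_const.prodMk measurable_id)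
    have hAB : A v + B v ≠ ⊤ := ENNReal.add_ne_top.2 ⟨hAv.ne, hBv.ne⟩
    calc (∫⁻ g in Set.Ioo (0:ℝ) G,
          ENNReal.ofReal (p v g / |(-gL * v + g * (VE - v))| ^ α))
        = ∫⁻ g in Set.Ioo (0:ℝ) G, ENNReal.ofReal (p v g) *
            ENNReal.ofReal ((|(-gL * v + g * (VE - v))| ^ α)⁻¹) := by
          refine lintegral_congr fun g => ?_
          rw [div_eq_mul_inv, ENNReal.ofReal_mul (hp v g)]
      _ ≤ ∫⁻ g in Set.Ioo (0:ℝ) G, (A v + B v) *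
            ENNReal.ofReal ((|(-gL * v + g * (VE - v))| ^ α)⁻¹) := by
          refine lintegral_mono_ae (ae_restrict_of_forall_mem measurableSet_Ioo
            fun g hg => ?_)
          refine mul_le_mul_left ?_ _
          exact pointwise_bound (p v) hpvm (hp v) (hdiff v hv) (hlim v hv)
            hAv.ne hBv.ne hg.1
      _ = (A v + B v) * ∫⁻ g in Set.Ioo (0:ℝ) G,
            ENNReal.ofReal ((|(-gL * v + g * (VE - v))| ^ α)⁻¹) :=
          lintegral_const_mul' _ _ hAB
      _ ≤ (A v + B v) * ENNReal.ofReal M :=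
          mul_le_mul_right (weight_bound VF VE gL hVF hVFE hgL α G hα0 hα1 hG hv) _
  -- conclude
  calc (∫⁻ x, ENNReal.ofReal (p x.1 x.2 / |(-gL * x.1 + x.2 * (VE - x.1))| ^ α)
        ∂((volume.restrict (Set.Ioo (0:ℝ) VF)).prod (volume.restrict (Set.Ioo (0:ℝ) G))))
      = ∫⁻ v in Set.Ioo (0:ℝ) VF, ∫⁻ g in Set.Ioo (0:ℝ) G,
          ENNReal.ofReal (p v g / |(-gL * v + g * (VE - v))| ^ α) :=
        lintegral_prod _ hfmain.aemeasurable
    _ ≤ ∫⁻ v in Set.Ioo (0:ℝ) VF, (A v + B v) * ENNReal.ofReal M :=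
        lintegral_mono_ae hae
    _ = ENNReal.ofReal M * ∫⁻ v in Set.Ioo (0:ℝ) VF, (A v + B v) := by
        simp_rw [mul_comm]
        exact lintegral_const_mul' _ _ ENNReal.ofReal_ne_top
    _ = ENNReal.ofReal M * ((∫⁻ v in Set.Ioo (0:ℝ) VF, A v) +
          ∫⁻ v in Set.Ioo (0:ℝ) VF, B v) := by
        rw [lintegral_add_left' hAmeas]
    _ ≤ ENNReal.ofReal M * (ENNReal.ofReal K + 1) :=
        mul_le_mul_right (add_le_add hKv hBv) _
    _ = ENNReal.ofReal (M * (K + 1)) := by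
        rw [ENNReal.ofReal_mul hM, ENNReal.ofReal_add hK zero_le_one, ENNReal.ofReal_one]
end
end

section
/- (Hölder interpolation to L^q with a vanishing weight.) Let V_F, V_E, g_L with 0 < V_F < V_E and g_L > 0, J_v(v,g) := −g_L v + g(V_E − v), G > 0, and Ω := (0,V_F)×(0,G). Let p : Ω → [0,∞) be measurable and assume: (i) J_v p ∈ L^r(Ω) for every 1 ≤ r < 4/3, and (ii) p/|J_v|^α ∈ L¹(Ω) for every 0 ≤ α < 1. Then p ∈ L^q(Ω) for every 1 ≤ q < 8/7. -/
open MeasureTheory Filter Set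

noncomputable section

lemma zero_set_null (VE gL : ℝ) (hVE : 0 < VE) (hgL : 0 < gL) :
    volume {x : ℝ × ℝ | -gL * x.1 + x.2 * (VE - x.1) = 0} = 0 := by
  set Z : Set (ℝ × ℝ) := {x : ℝ × ℝ | -gL * x.1 + x.2 * (VE - x.1) = 0} with hZ
  have hZm : MeasurableSet Z := by
    have : Z = (fun x : ℝ × ℝ => -gL * x.1 + x.2 * (VE - x.1)) ⁻¹' {0} := rfl
    rw [this]
    exact ((by fun_prop : Continuous fun x : ℝ × ℝ => -gL * x.1 + x.2 * (VE - x.1))).measurable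
      (measurableSet_singleton 0)
  rw [MeasureTheory.Measure.volume_eq_prod, Measure.prod_apply hZm]
  have : ∀ v : ℝ, volume (Prod.mk v ⁻¹' Z) = 0 := by
    intro v
    have hsub : (Prod.mk v ⁻¹' Z).Subsingleton := by
      intro g1 hg1 g2 hg2
      simp only [Z, Set.mem_preimage, Set.mem_setOf_eq] at hg1 hg2
      by_cases hv : VE - v = 0
      · exfalso
        rw [hv, mul_zero, add_zero] at hg1
        have : v = VE := by linarith
        nlinarith
      · have : (g1 - g2) * (VE - v) = 0 := by nlinarith
        rcases mul_eq_zero.1 this with h | h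
        · linarith
        · exact absurd h hv
    exact hsub.measure_zero _
  simp [this]


/-- Hölder interpolation with a vanishing weight: if `J_v p ∈ L^r`
for all `1 ≤ r < 4/3` and `p/|J_v|^α ∈ L¹` for all `0 ≤ α < 1`, then `p ∈ L^q`
for all `1 ≤ q < 8/7`. -/
theorem Lq_from_weighted_bounds
    (VF VE gL G : ℝ) (hVF : 0 < VF) (hVFE : VF < VE) (hgL : 0 < gL) (hG : 0 < G)
    (p : ℝ → ℝ → ℝ)
    (hmeas : Measurable fun x : ℝ × ℝ => p x.1 x.2)
    (hnonneg : ∀ v g, 0 ≤ p v g)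
    (hJp : ∀ r : ℝ, 1 ≤ r → r < 4 / 3 →
        MeasureTheory.MemLp (fun x : ℝ × ℝ => (-gL * x.1 + x.2 * (VE - x.1)) * p x.1 x.2)
          (ENNReal.ofReal r) (MeasureTheory.volume.restrict ((Set.Ioo (0:ℝ) VF) ×ˢ (Set.Ioo (0:ℝ) G))))
    (hsing : ∀ α : ℝ, 0 ≤ α → α < 1 →
        MeasureTheory.IntegrableOn
          (fun x : ℝ × ℝ => p x.1 x.2 / |(-gL * x.1 + x.2 * (VE - x.1))| ^ α)
          ((Set.Ioo (0:ℝ) VF) ×ˢ (Set.Ioo (0:ℝ) G))) :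
    ∀ q : ℝ, 1 ≤ q → q < 8 / 7 →
      MeasureTheory.MemLp (fun x : ℝ × ℝ => p x.1 x.2) (ENNReal.ofReal q)
        (MeasureTheory.volume.restrict ((Set.Ioo (0:ℝ) VF) ×ˢ (Set.Ioo (0:ℝ) G))) := by
  intro q hq1 hq2
  have hq0 : 0 < q := lt_of_lt_of_le one_pos hq1
  obtain ⟨θ, hθdef⟩ : ∃ θ : ℝ, θ = 9/4 - 2/q := ⟨_, rfl⟩
  have hθ0 : (1:ℝ)/4 ≤ θ := by
    have : 2/q ≤ 2 := by rw [div_le_iff₀ hq0]; linarith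
    rw [hθdef]; linarith
  have hθpos : 0 < θ := by linarith
  have hθhalf : θ < 1/2 := by
    have : 7/4 < 2/q := by rw [lt_div_iff₀ hq0]; nlinarith
    rw [hθdef]; linarith
  obtain ⟨α, hαdef⟩ : ∃ α : ℝ, α = θ / (1 - θ) := ⟨_, rfl⟩
  have hα0 : 0 ≤ α := hαdef ▸ div_nonneg hθpos.le (by linarith)
  have hα1 : α < 1 := by
    rw [hαdef, div_lt_one (by linarith)]; linarith
  obtain ⟨s, hsdef⟩ : ∃ s : ℝ, s = (q - 1) / (q * θ) := ⟨_, rfl⟩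
  have hs0 : 0 ≤ s := hsdef ▸ div_nonneg (by linarith) (by positivity)
  have hs4 : s < 1/4 := by
    rw [hsdef, div_lt_iff₀ (by positivity)]
    have h1 : 4 * (q - 1) < q * θ := by
      rw [hθdef]
      have : q * (9/4 - 2/q) = 9/4 * q - 2 := by field_simp
      rw [this]; nlinarith
    linarith
  obtain ⟨r, hrdef⟩ : ∃ r : ℝ, r = 1 / (1 - s) := ⟨_, rfl⟩
  have hr1 : 1 ≤ r := by
    rw [hrdef, le_div_iff₀ (by linarith)]; linarith
  have hr0 : 0 < r := lt_of_lt_of_le one_pos hr1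
  have hr43 : r < 4/3 := by
    rw [hrdef, div_lt_iff₀ (by linarith)]; linarith
  have hθs : θ * s = (q - 1) / q := by
    rw [hsdef]; field_simp
  have hαθ : α * (1 - θ) = θ := by
    rw [hαdef, div_mul_cancel₀ _ (by linarith : (1:ℝ) - θ ≠ 0)]
  -- key real exponent identity
  have hkey : θ / r + (1 - θ) = 1 / q := by
    have h1 : θ / r = θ * (1 - s) := by rw [hrdef]; field_simp
    rw [h1, mul_sub, mul_one, hθs]
    field_simp
    ring
  -- the two Memℒp factors
  have h1 := (hJp r hr1 hr43).norm_rpow_div (ENNReal.ofReal θ)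
  rw [ENNReal.toReal_ofReal hθpos.le] at h1
  have h2 := ((memLp_one_iff_integrable).2 (hsing α hα0 hα1)).norm_rpow_div
      (ENNReal.ofReal (1 - θ))
  rw [ENNReal.toReal_ofReal (by linarith : (0:ℝ) ≤ 1 - θ)] at h2
  -- Hölder
  have hpqr : 1 / ENNReal.ofReal q =
      1 / (1 / ENNReal.ofReal (1 - θ)) + 1 / (ENNReal.ofReal r / ENNReal.ofReal θ) := by
    simp only [one_div]
    rw [inv_inv]
    rw [
      ENNReal.inv_div (Or.inl (ENNReal.ofReal_ne_top))
        (Or.inl (by simp only [ne_eq, ENNReal.ofReal_eq_zero, not_le]; linarith))]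
    rw [← ENNReal.ofReal_div_of_pos hr0,
      ← ENNReal.ofReal_inv_of_pos hq0,
      ← ENNReal.ofReal_add (by linarith) (by positivity)]
    congr 1
    rw [inv_eq_one_div, ← hkey]; ring
  have hprod := MeasureTheory.MemLp.smul (r := ENNReal.ofReal q) h1 h2
    (hpqr := ⟨by simpa only [one_div] using hpqr.symm⟩)
  -- a.e. identity
  refine hprod.ae_eq ?_
  have hZ : volume {x : ℝ × ℝ | -gL * x.1 + x.2 * (VE - x.1) = 0} = 0 :=
    zero_set_null VE gL (by linarith) hgL
  have hae : ∀ᵐ x : ℝ × ℝ, -gL * x.1 + x.2 * (VE - x.1) ≠ 0 := by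
    rw [MeasureTheory.ae_iff]
    simpa using hZ
  refine MeasureTheory.ae_restrict_of_ae ?_
  filter_upwards [hae] with x hx
  show ‖p x.1 x.2 / |(-gL * x.1 + x.2 * (VE - x.1))| ^ α‖ ^ (1 - θ) •
      ‖(-gL * x.1 + x.2 * (VE - x.1)) * p x.1 x.2‖ ^ θ = p x.1 x.2
  set J := -gL * x.1 + x.2 * (VE - x.1) with hJdef
  set P := p x.1 x.2 with hP
  have hPnn : 0 ≤ P := hnonneg _ _
  have hA : 0 < |J| := abs_pos.2 hx
  rw [smul_eq_mul, Real.norm_eq_abs, Real.norm_eq_abs, abs_mul,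
    abs_div, abs_of_nonneg hPnn,
    abs_of_nonneg (Real.rpow_nonneg (abs_nonneg J) α)]
  rcases eq_or_lt_of_le hPnn with hP0 | hP0
  · rw [← hP0, zero_div, mul_zero, Real.zero_rpow (by linarith : (1:ℝ) - θ ≠ 0),
      Real.zero_rpow hθpos.ne', zero_mul]
  · rw [Real.div_rpow hPnn (Real.rpow_nonneg (abs_nonneg J) α),
      Real.mul_rpow (abs_nonneg J) hPnn,
      ← Real.rpow_mul (abs_nonneg J), hαθ]
    have hJθ : |J| ^ θ ≠ 0 := (Real.rpow_pos_of_pos hA θ).ne'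
    have hPP : P ^ (1 - θ) * P ^ θ = P := by
      rw [← Real.rpow_add hP0]; simp
    calc P ^ (1-θ) / |J| ^ θ * (|J| ^ θ * P ^ θ)
        = (P ^ (1-θ) * P ^ θ) * (|J| ^ θ / |J| ^ θ) := by ring
      _ = P * 1 := by rw [hPP, div_self hJθ]
      _ = P := mul_one P
end
end
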